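/- Let k ≥ 3. Then b_n^(k) = 2·f_{n−1}^(k−1) for all n ≥ 1, and b_0^(k) = 1. -/

import Mathlib

/-- A binary string (list of booleans, `false` = 0, `true` = 1) avoids `0^k`
and `1^k`, i.e. it contains neither `k` consecutive 0's nor `k` consecutive 1's. -/
def Avoids (k : ℕ) (s : List Bool) : Prop :=
  ¬ (List.replicate k false <:+: s) ∧ ¬ (List.replicate k true <:+: s)
/-- `bcount k n = b_n^(k)`: the number of binary strings of length `n`
avoiding `0^k` and `1^k`. -/
noncomputable def bcount (k n : ℕ) : ℕ :=
  Set.ncard {s : List Bool | s.length = n ∧ Avoids k s}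
/-- The `k`-generalized Fibonacci numbers: `f_n^(k) = 2^n` for `0 ≤ n ≤ k−1`
and `f_n^(k) = f_{n−1}^(k) + … + f_{n−k}^(k)` for `n ≥ k`. -/
def genFib (k : ℕ) (n : ℕ) : ℕ :=
  if n < k then 2 ^ n
  else ∑ j ∈ (Finset.Icc 1 k).attach, genFib k (n - j.1)
termination_by n
decreasing_by
  have hj := j.2
  simp only [Finset.mem_Icc] at hj
  omega

open List Finset

instance (k : ℕ) : DecidablePred (Avoids k) := fun s => by
  unfold Avoids; infer_instance

/-! ### derivative and integral of strings -/

def dder : List Bool → List Bool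
  | [] => []
  | [_] => []
  | a :: b :: t => (a == b) :: dder (b :: t)

def integ : Bool → List Bool → List Bool
  | b, [] => [b]
  | b, d :: ds => b :: integ (bif d then b else !b) ds

lemma length_integ (b : Bool) (ds : List Bool) : (integ b ds).length = ds.length + 1 := by
  induction ds generalizing b with
  | nil => rfl
  | cons d ds ih => simp [integ, ih]

lemma length_dder (s : List Bool) : (dder s).length = s.length - 1 := by
  match s with
  | [] => rfl
  | [_] => rfl
  | a :: b :: t => simp [dder, length_dder (b :: t)]

lemma headI_integ (b : Bool) (ds : List Bool) : (integ b ds).headI = b := by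
  cases ds <;> rfl

lemma dder_integ (b : Bool) (ds : List Bool) : dder (integ b ds) = ds := by
  induction ds generalizing b with
  | nil => rfl
  | cons d ds ih =>
    have h1 : integ b (d :: ds) = b :: integ (bif d then b else !b) ds := rfl
    obtain ⟨t, hct⟩ : ∃ t, integ (bif d then b else !b) ds
        = (bif d then b else !b) :: t := by
      cases ds <;> exact ⟨_, rfl⟩
    rw [h1, hct, dder]
    have : (b == (bif d then b else !b)) = d := by cases d <;> cases b <;> rfl
    rw [this, ← hct, ih]

lemma integ_dder (a : Bool) (t : List Bool) : integ a (dder (a :: t)) = a :: t := by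
  induction t generalizing a with
  | nil => rfl
  | cons b t ih =>
    have h1 : dder (a :: b :: t) = (a == b) :: dder (b :: t) := rfl
    rw [h1, integ]
    have : (bif (a == b) then a else !a) = b := by cases a <;> cases b <;> rfl
    rw [this, ih]

lemma dder_suffix (u v : List Bool) : dder v <:+: dder (u ++ v) := by
  induction u with
  | nil => simp
  | cons a u ih =>
    refine ih.trans ?_
    show dder (u ++ v) <:+: dder (a :: (u ++ v))
    cases h : u ++ v with
    | nil => simp [h, dder]
    | cons x xs => rw [dder]; exact List.infix_cons List.infix_rfl

lemma dder_prefix (u v : List Bool) : dder u <+: dder (u ++ v) := by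
  induction u with
  | nil => simp [dder]
  | cons a u ih =>
    cases u with
    | nil => simp [dder]
    | cons b t =>
      show dder (a :: b :: t) <+: dder (a :: b :: (t ++ v))
      rw [dder, dder]
      exact List.cons_prefix_cons.mpr ⟨rfl, ih⟩

lemma dder_infix {x s : List Bool} (h : x <:+: s) : dder x <:+: dder s := by
  obtain ⟨u, w, rfl⟩ := h
  have h1 : dder x <+: dder (x ++ w) := dder_prefix x w
  have h2 : dder (x ++ w) <:+: dder (u ++ (x ++ w)) := dder_suffix u (x ++ w)
  rw [← List.append_assoc] at h2
  exact h1.isInfix.trans h2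


lemma dder_replicate (k : ℕ) (c : Bool) :
    dder (List.replicate k c) = List.replicate (k - 1) true := by
  induction k with
  | zero => rfl
  | succ n ih =>
    cases n with
    | zero => rfl
    | succ m =>
      show dder (c :: c :: List.replicate m c) = _
      rw [dder]
      have : c :: List.replicate m c = List.replicate (m + 1) c := rfl
      rw [this, ih]
      simp [List.replicate_succ]

lemma run_of_prefix : ∀ (j : ℕ) (a : Bool) (t : List Bool),
    List.replicate j true <+: dder (a :: t) →
    List.replicate (j + 1) a <+: a :: t := by
  intro j
  induction j with
  | zero => intro a t _; simpa using ⟨t, rfl⟩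
  | succ j ih =>
    intro a t h
    cases t with
    | nil => simp [dder, List.replicate_succ] at h
    | cons b t' =>
      rw [show dder (a :: b :: t') = (a == b) :: dder (b :: t') from rfl,
        List.replicate_succ, List.cons_prefix_cons] at h
      obtain ⟨hab, h2⟩ := h
      have hb : b = a := by
        revert hab; cases a <;> cases b <;> simp
      have := ih b t' h2
      rw [List.replicate_succ, List.cons_prefix_cons]
      refine ⟨rfl, ?_⟩
      rw [hb] at this ⊢
      exact this

lemma run_of_infix {j : ℕ} (hj : 1 ≤ j) : ∀ (s : List Bool),
    List.replicate j true <:+: dder s → ∃ c, List.replicate (j + 1) c <:+: s := by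
  intro s
  induction s with
  | nil =>
    intro h
    rw [show dder [] = [] from rfl] at h
    have := h.length_le
    simp at this
    omega
  | cons a t ih =>
    intro h
    cases t with
    | nil =>
      rw [show dder [a] = [] from rfl] at h
      have := h.length_le; simp at this; omega
    | cons b t' =>
      rw [show dder (a :: b :: t') = (a == b) :: dder (b :: t') from rfl,
        List.infix_cons_iff] at h
      rcases h with h | h
      · rw [show ((a == b) :: dder (b :: t')) = dder (a :: b :: t') from rfl] at h
        exact ⟨a, (run_of_prefix j a (b :: t') h).isInfix⟩
      · obtain ⟨c, hc⟩ := ih h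
        exact ⟨c, hc.trans (List.infix_cons List.infix_rfl)⟩

lemma avoids_iff_dder {k : ℕ} (hk : 2 ≤ k) (s : List Bool) :
    Avoids k s ↔ ¬ (List.replicate (k - 1) true <:+: dder s) := by
  constructor
  · rintro ⟨h0, h1⟩ h
    obtain ⟨c, hc⟩ := run_of_infix (by omega) s h
    rw [show k - 1 + 1 = k by omega] at hc
    cases c
    · exact h0 hc
    · exact h1 hc
  · intro h
    constructor <;> intro hr <;> apply h
    · have := dder_infix hr
      rwa [dder_replicate] at this
    · have := dder_infix hr
      rwa [dder_replicate] at this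

/-! ### splitting runs at a false -/

lemma run_prefix_split : ∀ (j : ℕ) (u v : List Bool),
    List.replicate j true <+: u ++ false :: v → List.replicate j true <+: u := by
  intro j
  induction j with
  | zero => intro u v _; simp
  | succ j ih =>
    intro u v h
    cases u with
    | nil => rw [List.replicate_succ, List.nil_append, List.cons_prefix_cons] at h; simp at h
    | cons a u' =>
      rw [List.replicate_succ, List.cons_append, List.cons_prefix_cons] at h
      obtain ⟨ha, h2⟩ := h
      rw [List.replicate_succ, List.cons_prefix_cons]
      exact ⟨ha, ih u' v h2⟩

lemma run_infix_split {j : ℕ} {v : List Bool} : ∀ (u : List Bool),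
    List.replicate j true <:+: u ++ false :: v →
    List.replicate j true <:+: u ∨ List.replicate j true <:+: v := by
  intro u
  induction u with
  | nil =>
    intro h
    rw [List.nil_append, List.infix_cons_iff] at h
    rcases h with h | h
    · cases j with
      | zero => left; simp
      | succ j => rw [List.replicate_succ, List.cons_prefix_cons] at h; simp at h
    · right; exact h
  | cons a u' ih =>
    intro h
    rw [List.cons_append, List.infix_cons_iff] at h
    rcases h with h | h
    · rw [← List.cons_append] at h
      exact Or.inl (run_prefix_split j (a :: u') v h).isInfix
    · rcases ih h with h | h
      · exact Or.inl (h.trans (List.infix_cons List.infix_rfl))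
      · exact Or.inr h

/-! ### leading trues -/

def leadT : List Bool → ℕ
  | [] => 0
  | false :: _ => 0
  | true :: t => leadT t + 1

lemma leadT_spec : ∀ (s : List Bool),
    s = List.replicate (leadT s) true ∨
    ∃ r, s = List.replicate (leadT s) true ++ false :: r := by
  intro s
  induction s with
  | nil => left; rfl
  | cons a t ih =>
    cases a with
    | false => right; exact ⟨t, rfl⟩
    | true =>
      rcases ih with h | ⟨r, h⟩
      · left; rw [show leadT (true :: t) = leadT t + 1 from rfl, List.replicate_succ]
        exact congrArg _ h
      · right
        exact ⟨r, by rw [show leadT (true :: t) = leadT t + 1 from rfl, List.replicate_succ,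
          List.cons_append]; exact congrArg _ h⟩

lemma leadT_run (i : ℕ) (r : List Bool) :
    leadT (List.replicate i true ++ false :: r) = i := by
  induction i with
  | zero => rfl
  | succ n ih =>
    rw [List.replicate_succ, List.cons_append, show ∀ t, leadT (true :: t) = leadT t + 1
      from fun _ => rfl, ih]

/-! ### Finset counting -/

def allF (n : ℕ) : Finset (List Bool) :=
  (Finset.univ : Finset (Fin n → Bool)).image List.ofFn

lemma mem_allF {n : ℕ} {s : List Bool} : s ∈ allF n ↔ s.length = n := by
  constructor
  · intro h
    simp only [allF, Finset.mem_image] at h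
    obtain ⟨f, _, rfl⟩ := h
    simp
  · intro h
    subst h
    simp only [allF, Finset.mem_image]
    exact ⟨fun i => s[i], Finset.mem_univ _, List.ofFn_getElem⟩

lemma card_allF (n : ℕ) : (allF n).card = 2 ^ n := by
  rw [allF, Finset.card_image_of_injective _ List.ofFn_injective]
  simp

def goodF (k n : ℕ) : Finset (List Bool) := (allF n).filter (Avoids k)

def noRunF (j m : ℕ) : Finset (List Bool) :=
  (allF m).filter (fun s => ¬ (List.replicate j true <:+: s))

lemma bcount_eq_goodF (k n : ℕ) : bcount k n = (goodF k n).card := by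
  rw [bcount, ← Set.ncard_coe_finset]
  congr 1
  ext s
  simp [goodF, mem_allF]

lemma goodF_card (k : ℕ) (hk : 2 ≤ k) (n : ℕ) :
    (goodF k (n + 1)).card = 2 * (noRunF (k - 1) n).card := by
  have htarget : ((Finset.univ : Finset Bool) ×ˢ noRunF (k - 1) n).card
      = 2 * (noRunF (k - 1) n).card := by
    rw [Finset.card_product]; simp
  rw [← htarget]
  apply Finset.card_bij' (fun s _ => (s.headI, dder s)) (fun p _ => integ p.1 p.2)
  · intro s hs
    simp only [goodF, Finset.mem_filter, mem_allF] at hs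
    obtain ⟨hlen, hav⟩ := hs
    simp only [Finset.mem_product, Finset.mem_univ, true_and, noRunF,
      Finset.mem_filter, mem_allF]
    refine ⟨?_, ?_⟩
    · rw [length_dder, hlen]; omega
    · exact (avoids_iff_dder hk s).1 hav
  · rintro ⟨b, d⟩ hp
    simp only [Finset.mem_product, noRunF, Finset.mem_filter, mem_allF] at hp
    obtain ⟨_, hlen, hno⟩ := hp
    simp only [goodF, Finset.mem_filter, mem_allF]
    refine ⟨by rw [length_integ, hlen], ?_⟩
    rw [avoids_iff_dder hk, dder_integ]
    exact hno
  · intro s hs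
    simp only [goodF, Finset.mem_filter, mem_allF] at hs
    obtain ⟨hlen, _⟩ := hs
    cases s with
    | nil => simp at hlen
    | cons a t => exact integ_dder a t
  · rintro ⟨b, d⟩ _
    simp [headI_integ, dder_integ]

lemma noRunF_decomp {j m : ℕ} (hj : 1 ≤ j) (hm : j ≤ m) :
    noRunF j m = (Finset.range j).biUnion
      (fun i => (noRunF j (m - 1 - i)).image
        (fun r => List.replicate i true ++ false :: r)) := by
  ext s
  simp only [Finset.mem_biUnion, Finset.mem_range, Finset.mem_image, noRunF,
    Finset.mem_filter, mem_allF]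
  constructor
  · rintro ⟨hlen, hno⟩
    rcases leadT_spec s with h | ⟨r, h⟩
    · exfalso
      apply hno
      have hl : leadT s = m := by rw [h] at hlen; simpa using hlen
      rw [h, hl]
      exact ⟨[], List.replicate (m - j) true, by
        rw [List.nil_append, ← List.replicate_add, Nat.add_sub_cancel' hm]⟩
    · set i := leadT s with hi
      have hilt : i < j := by
        by_contra hge
        push_neg at hge
        apply hno
        refine ⟨[], List.replicate (i - j) true ++ false :: r, ?_⟩
        rw [List.nil_append, ← List.append_assoc, ← List.replicate_add,
          Nat.add_sub_cancel' hge, ← h]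
      have hrlen : r.length = m - 1 - i := by
        rw [h] at hlen
        simp at hlen
        omega
      refine ⟨i, hilt, r, ⟨hrlen, ?_⟩, h.symm⟩
      intro hcon
      exact hno (hcon.trans ⟨List.replicate i true ++ [false], [], by simp [h]⟩)
  · rintro ⟨i, hilt, r, ⟨hrlen, hno⟩, rfl⟩
    have hiltm : i < m := lt_of_lt_of_le hilt hm
    constructor
    · simp [hrlen]; omega
    · intro hcon
      rcases run_infix_split _ hcon with h | h
      · have := h.length_le
        simp at this
        omega
      · exact hno h

lemma noRunF_card_rec {j m : ℕ} (hj : 1 ≤ j) (hm : j ≤ m) :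
    (noRunF j m).card = ∑ i ∈ Finset.range j, (noRunF j (m - 1 - i)).card := by
  rw [noRunF_decomp hj hm, Finset.card_biUnion]
  · apply Finset.sum_congr rfl
    intro i _
    apply Finset.card_image_of_injOn
    intro r₁ _ r₂ _ h
    simpa using h
  · intro x _ y _ hxy
    rw [Function.onFun, Finset.disjoint_left]
    rintro s hs ht
    simp only [Finset.mem_image] at hs ht
    obtain ⟨r₁, _, h₁⟩ := hs
    obtain ⟨r₂, _, h₂⟩ := ht
    apply hxy
    rw [← leadT_run x r₁, h₁, ← h₂, leadT_run]

lemma noRunF_card_eq_genFib {j : ℕ} (hj : 1 ≤ j) : ∀ m, (noRunF j m).card = genFib j m := by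
  intro m
  induction m using Nat.strong_induction_on with
  | _ m ih =>
    by_cases hm : m < j
    · have : noRunF j m = allF m := by
        rw [noRunF, Finset.filter_true_of_mem]
        intro s hs hcon
        rw [mem_allF] at hs
        have := hcon.length_le
        simp at this
        omega
      rw [this, card_allF, genFib, if_pos hm]
    · push_neg at hm
      rw [noRunF_card_rec hj hm, genFib, if_neg (by omega)]
      rw [Finset.sum_attach (Finset.Icc 1 j) (fun x => genFib j (m - x))]
      rw [show Finset.Icc 1 j = Finset.Ico 1 (j + 1) by rfl, Finset.sum_Ico_eq_sum_range]
      simp only [Nat.add_sub_cancel]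
      apply Finset.sum_congr rfl
      intro i hi
      rw [Finset.mem_range] at hi
      rw [ih (m - 1 - i) (by omega)]
      congr 1
      omega


/-- `b_0^(k) = 1` and `b_n^(k) = 2 f_{n−1}^(k−1)` for all `n ≥ 1`. -/
theorem bcount_eq_two_mul_genFib (k : ℕ) (hk : 3 ≤ k) :
    bcount k 0 = 1 ∧ ∀ n : ℕ, 1 ≤ n → bcount k n = 2 * genFib (k - 1) (n - 1) := by
  constructor
  · have : {s : List Bool | s.length = 0 ∧ Avoids k s} = {([] : List Bool)} := by
      ext s
      simp only [Set.mem_setOf_eq, Set.mem_singleton_iff, List.length_eq_zero_iff]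
      constructor
      · exact fun h => h.1
      · rintro rfl
        refine ⟨rfl, ?_, ?_⟩ <;> intro h <;> have := h.length_le <;> simp at this <;> omega
    rw [bcount, this, Set.ncard_singleton]
  · intro n hn
    obtain ⟨m, rfl⟩ : ∃ m, n = m + 1 := ⟨n - 1, by omega⟩
    rw [bcount_eq_goodF, goodF_card k (by omega) m,
      noRunF_card_eq_genFib (by omega) m]
    simp
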